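/- The transpose λ' of a partition λ = (α_1+1, …, α_p+1 | α_1, …, α_p) in Frobenius notation (α_1 > ⋯ > α_p ≥ 0) is an even partition if and only if p is even, α_1, α_3, …, α_{p−1} are all odd, and α_{2i−1} − α_{2i} = 1 for all i = 1,…,p/2. -/
import Mathlib


/-- the transpose of a partition `λ = (α₁+1, …, α_p+1 | α₁, …, α_p)` in
Frobenius notation (realized as a Young diagram `μ` with Durfee square of size `p`,
0-based row lengths `α i + i + 2` and column lengths `α i + i + 1`) is an even
partition if and only if `p` is even, `α₁, α₃, …, α_{p−1}` (0-based: the `α` at even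
indices) are all odd, and `α_{2i−1} − α_{2i} = 1` for all `i = 1, …, p/2`. -/
theorem frobenius_transpose_even_iff (p : ℕ) (hp : 1 ≤ p) (α : Fin p → ℕ)
    (hα : StrictAnti α) (μ : YoungDiagram)
    (hdiag : ∀ i : Fin p, ((i : ℕ), (i : ℕ)) ∈ μ) (hdur : (p, p) ∉ μ)
    (hrow : ∀ i : Fin p, μ.rowLen i = α i + i + 2)
    (hcol : ∀ i : Fin p, μ.colLen i = α i + i + 1) :
    (∀ i : ℕ, Even (μ.transpose.rowLen i)) ↔
      (Even p ∧ (∀ i : Fin p, Even (i : ℕ) → Odd (α i)) ∧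
        (∀ j : ℕ, ∀ h : 2 * j + 1 < p, α ⟨2 * j, by omega⟩ = α ⟨2 * j + 1, h⟩ + 1)) := by
  simp only [YoungDiagram.rowLen_transpose]
  -- membership characterizations
  have hmemr : ∀ i j : ℕ, (i, j) ∈ μ ↔ j < μ.rowLen i := fun i j =>
    YoungDiagram.mem_iff_lt_rowLen
  have hmemc : ∀ i j : ℕ, (i, j) ∈ μ ↔ i < μ.colLen j := fun i j =>
    YoungDiagram.mem_iff_lt_colLen
  constructor
  · rintro h
    -- parity of α at each index
    have hpar : ∀ i : Fin p, (Even (i : ℕ) → Odd (α i)) ∧ (¬ Even (i : ℕ) → Even (α i)) := by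
      intro i
      have := h i
      rw [hcol i] at this
      rw [Nat.even_iff] at this ⊢
      rw [Nat.even_iff, Nat.odd_iff]
      omega
    have hevenp : Even p := by
      have hc : μ.colLen p = p := by
        have h1 : (p - 1, p) ∈ μ := by
          rw [hmemr]
          rw [hrow ⟨p - 1, by omega⟩]
          simp only
          omega
        rw [hmemc] at h1
        rw [hmemc] at hdur
        omega
      have := h p
      rwa [hc] at this
    refine ⟨hevenp, fun i => (hpar i).1, ?_⟩
    intro j hj
    set a := α ⟨2 * j, by omega⟩ with ha
    set b := α ⟨2 * j + 1, hj⟩ with hb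
    have hba : b < a := hα (by simp [Fin.lt_def])
    have haodd : Odd a := (hpar ⟨2 * j, by omega⟩).1 (by simp only [Fin.val_mk]; exact even_two_mul j)
    have hbeven : Even b := (hpar ⟨2 * j + 1, hj⟩).2
      (by simp only [Fin.val_mk, Nat.even_iff]; omega)
    by_contra hne
    have hge : b + 3 ≤ a := by
      rw [Nat.odd_iff] at haodd; rw [Nat.even_iff] at hbeven; omega
    -- column c = b + 2j + 3 has length 2j+1, odd: contradiction
    have hc : μ.colLen (b + 2 * j + 3) = 2 * j + 1 := by
      have h1 : (2 * j, b + 2 * j + 3) ∈ μ := by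
        rw [hmemr, hrow ⟨2 * j, by omega⟩]
        simp only
        omega
      have h2 : (2 * j + 1, b + 2 * j + 3) ∉ μ := by
        rw [hmemr, hrow ⟨2 * j + 1, hj⟩]
        simp only
        omega
      rw [hmemc] at h1 h2
      omega
    have := h (b + 2 * j + 3)
    rw [hc, Nat.even_iff] at this
    omega
  · rintro ⟨hep, hodd, hgap⟩ c
    -- parities: α even-index odd, α odd-index even
    have hpar : ∀ i : Fin p, (α i + i) % 2 = 1 := by
      intro i
      rcases Nat.even_or_odd (i : ℕ) with hi | hi
      · have := hodd i hi
        rw [Nat.odd_iff] at this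
        rw [Nat.even_iff] at hi
        omega
      · obtain ⟨j, hj⟩ := hi
        have h2j1 : 2 * j + 1 < p := by omega
        have hg := hgap j h2j1
        have ho := hodd ⟨2 * j, by omega⟩ (by simp only [Fin.val_mk]; exact even_two_mul j)
        rw [Nat.odd_iff] at ho
        have hi' : i = ⟨2 * j + 1, h2j1⟩ := Fin.ext (by simp only [Fin.val_mk]; omega)
        subst hi'
        simp only [Fin.val_mk] at *
        omega
    rcases Nat.lt_or_ge c p with hcp | hcp
    · rw [hcol ⟨c, hcp⟩]
      have := hpar ⟨c, hcp⟩
      simp only at this ⊢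
      rw [Nat.even_iff]
      omega
    · -- c ≥ p : colLen c = some even k ≤ p
      set k := μ.colLen c with hk
      have hkp : k ≤ p := by
        have : (p, c) ∉ μ := fun hm => hdur (μ.up_left_mem le_rfl hcp hm)
        rw [hmemc] at this
        omega
      rw [Nat.even_iff]
      by_contra hko
      have hkodd : k % 2 = 1 := by omega
      -- k odd, k < p since p even
      rw [Nat.even_iff] at hep
      have hklt : k < p := by omega
      obtain ⟨j, hj⟩ : ∃ j, k = 2 * j + 1 := ⟨k / 2, by omega⟩
      have h2j1 : 2 * j + 1 < p := by omega
      -- rows 2j and 2j+1 have equal length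
      have hg := hgap j h2j1
      -- (k, c) ∉ μ and (k-1, c) ∈ μ
      have h2 : (2 * j + 1, c) ∉ μ := by rw [hmemc]; omega
      have h1 : (2 * j, c) ∈ μ := by rw [hmemc]; omega
      rw [hmemr, hrow ⟨2 * j, by omega⟩] at h1
      rw [hmemr, hrow ⟨2 * j + 1, h2j1⟩] at h2
      simp only at h1 h2
      omega
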